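/- arXiv:1804.00308 — 7 statements merged into one kernel-verified Lean document; each statement's English description precedes it below -/
import Mathlib

section
/- (Theorem 1: termination of the TRIM algorithm) Suppose (I_i)_{i≥0} is a sequence of index subsets of {1,…,N}, each of size n, and (θ_i)_{i≥0} is a sequence of parameters in ℝ^d × ℝ such that: for every i ≥ 0, L(I_i, θ_i) ≤ L(I_i, θ) for all θ (θ_i minimizes the loss on I_i), and for every i ≥ 1, L(I_i, θ_{i−1}) ≤ L(J, θ_{i−1}) for every size-n subset J (I_i is a size-n subset minimizing the loss under θ_{i−1}). Let R_i = L(I_i, θ_i). Then there exists an index i with 1 ≤ i ≤ C(N,n) (the binomial coefficient) such that R_{i+1} = R_i; in particular the TRIM algorithm terminates in a finite number of iterations. -/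
/-- The trimmed regularized loss `L(I, θ) = (1/n) Σ_{j∈I} (⟨w, x_j⟩ + b − y_j)² + λ Ω(w)`. -/
noncomputable def trimLoss {d N : ℕ} (n : ℕ) (x : Fin N → Fin d → ℝ) (y : Fin N → ℝ)
    (Ω : (Fin d → ℝ) → ℝ) (lam : ℝ) (I : Finset (Fin N)) (θ : (Fin d → ℝ) × ℝ) : ℝ :=
  (1 / (n : ℝ)) * ∑ j ∈ I, ((∑ i, θ.1 i * x j i) + θ.2 - y j) ^ 2 + lam * Ω θ.1

/-- Theorem 1 (termination of TRIM): along the TRIM iterates, the loss value repeats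
within the first `C(N, n)` steps, hence the algorithm terminates. -/
theorem trim_terminates (d n N : ℕ) (hn : 0 < n) (hnN : n ≤ N)
    (x : Fin N → Fin d → ℝ) (y : Fin N → ℝ)
    (Ω : (Fin d → ℝ) → ℝ) (lam : ℝ) (hlam : 0 ≤ lam)
    (I : ℕ → Finset (Fin N)) (θ : ℕ → (Fin d → ℝ) × ℝ)
    (hcard : ∀ i, (I i).card = n)
    (hmin : ∀ (i : ℕ) (θ' : (Fin d → ℝ) × ℝ),
      trimLoss n x y Ω lam (I i) (θ i) ≤ trimLoss n x y Ω lam (I i) θ')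
    (hsel : ∀ i : ℕ, 1 ≤ i → ∀ J : Finset (Fin N), J.card = n →
      trimLoss n x y Ω lam (I i) (θ (i - 1)) ≤ trimLoss n x y Ω lam J (θ (i - 1))) :
    ∃ i : ℕ, 1 ≤ i ∧ i ≤ Nat.choose N n ∧
      trimLoss n x y Ω lam (I (i + 1)) (θ (i + 1)) = trimLoss n x y Ω lam (I i) (θ i) := by
  set R : ℕ → ℝ := fun i => trimLoss n x y Ω lam (I i) (θ i) with hR
  set C := Nat.choose N n with hC
  by_contra hcon
  push_neg at hcon
  -- the loss is non-increasing along iterates (for i ≥ 1)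
  have hle : ∀ i : ℕ, 1 ≤ i → R (i + 1) ≤ R i := by
    intro i hi
    have h1 := hmin (i + 1) (θ i)
    have h2 := hsel (i + 1) (by omega) (I i) (hcard i)
    simp only [Nat.add_sub_cancel] at h2
    exact le_trans h1 h2
  have hlt : ∀ i : ℕ, 1 ≤ i → i ≤ C → R (i + 1) < R i := fun i hi hiC =>
    lt_of_le_of_ne (hle i hi) (hcon i hi hiC)
  -- hence strictly decreasing on [1, C+1]
  have hstrict : ∀ j : ℕ, j ≤ C + 1 → ∀ i : ℕ, 1 ≤ i → i < j → R j < R i := by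
    intro j
    induction j with
    | zero => omega
    | succ k ih =>
      intro hk i hi hij
      rcases eq_or_lt_of_le (Nat.lt_succ_iff.mp hij) with h' | h'
      · rw [← h']
        exact hlt i hi (by omega)
      · exact lt_trans (hlt k (by omega) (by omega)) (ih (by omega) i hi h')
  -- R i depends only on the set I i
  have hIR : ∀ i j : ℕ, I i = I j → R i = R j := by
    intro i j hij
    have h1 : R i ≤ R j := by
      calc R i ≤ trimLoss n x y Ω lam (I i) (θ j) := hmin i (θ j)
        _ = R j := by rw [hij]
    have h2 : R j ≤ R i := by
      calc R j ≤ trimLoss n x y Ω lam (I j) (θ i) := hmin j (θ i)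
        _ = R i := by rw [← hij]
    linarith
  -- so I is injective on [1, C+1]
  have hinj : Set.InjOn I ↑(Finset.Icc 1 (C + 1)) := by
    intro i hi j hj hij
    simp only [Finset.coe_Icc, Set.mem_Icc] at hi hj
    by_contra hne
    rcases Nat.lt_or_ge i j with h | h
    · exact absurd (hIR i j hij) (ne_of_gt (hstrict j hj.2 i hi.1 h))
    · have h' : j < i := by omega
      exact absurd (hIR j i hij.symm) (ne_of_gt (hstrict i hi.2 j hj.1 h'))
  -- counting: C+1 distinct n-subsets among only C many
  have hsub : ∀ i ∈ Finset.Icc 1 (C + 1), I i ∈ Finset.univ.powersetCard n := by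
    intro i _
    simp [Finset.mem_powersetCard, hcard i]
  have hcardle := Finset.card_le_card_of_injOn I hsub hinj
  rw [Finset.card_powersetCard, Finset.card_univ, Fintype.card_fin] at hcardle
  simp only [Nat.card_Icc, Nat.add_sub_cancel] at hcardle
  omega
end

section
/- (Theorem 2: estimation bound for the global trimmed optimum) Let (θ̂, Î) be a global minimizer of the trimmed objective, i.e. Î ⊆ {1,…,N} has size n and L(Î, θ̂) ≤ L(I, θ) for every size-n subset I and every θ. Let θ* satisfy L(P, θ*) ≤ L(P, θ) for all θ, where P = {1,…,n} is the set of pristine indices (θ* is the estimator trained on pristine data). Then there exists a subset I' ⊆ P of pristine indices with |I'| = n − p such that MSE(I', θ̂) ≤ (1 + α/(1−α)) · L(P, θ*), where α = p/n (equivalently, MSE(I', θ̂) ≤ (n/(n−p)) · L(P, θ*)). -/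
/-- `MSE(I, θ) = (1/|I|) Σ_{j∈I} (⟨w, x_j⟩ + b − y_j)²`. -/
noncomputable def trimMSE {d N : ℕ} (x : Fin N → Fin d → ℝ) (y : Fin N → ℝ)
    (I : Finset (Fin N)) (θ : (Fin d → ℝ) × ℝ) : ℝ :=
  (1 / (I.card : ℝ)) * ∑ j ∈ I, ((∑ i, θ.1 i * x j i) + θ.2 - y j) ^ 2

/-- Theorem 2 (estimation bound for the global trimmed optimum): there is a subset `I'`
of `n − p` pristine points with `MSE(I', θ̂) ≤ (n/(n−p)) · L(P, θ*) = (1 + α/(1−α)) · L(P, θ*)`. -/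
theorem trim_estimation_bound (d n p : ℕ) (hp : 0 < p) (hpn : p < n)
    (x : Fin (n + p) → Fin d → ℝ) (y : Fin (n + p) → ℝ)
    (Ω : (Fin d → ℝ) → ℝ) (hΩ : ∀ w, 0 ≤ Ω w) (lam : ℝ) (hlam : 0 ≤ lam)
    (P : Finset (Fin (n + p))) (hP : P = Finset.univ.filter fun j : Fin (n + p) => (j : ℕ) < n)
    (θhat : (Fin d → ℝ) × ℝ) (Ihat : Finset (Fin (n + p))) (hIhat : Ihat.card = n)
    (hglobal : ∀ (I : Finset (Fin (n + p))) (θ : (Fin d → ℝ) × ℝ), I.card = n →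
      trimLoss n x y Ω lam Ihat θhat ≤ trimLoss n x y Ω lam I θ)
    (θstar : (Fin d → ℝ) × ℝ)
    (hstar : ∀ θ : (Fin d → ℝ) × ℝ,
      trimLoss n x y Ω lam P θstar ≤ trimLoss n x y Ω lam P θ) :
    ∃ I' ⊆ P, I'.card = n - p ∧
      trimMSE x y I' θhat ≤ ((n : ℝ) / ((n : ℝ) - (p : ℝ))) * trimLoss n x y Ω lam P θstar := by
  have hn : 0 < n := hpn.trans' hp
  -- card of P
  have hPcard : P.card = n := by
    subst hP
    rw [show (Finset.univ.filter fun j : Fin (n + p) => (j : ℕ) < n)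
        = Finset.map (Fin.castLEEmb (Nat.le_add_right n p)) Finset.univ by
      ext j
      simp only [Finset.mem_filter, Finset.mem_univ, true_and, Finset.mem_map,
        Fin.castLEEmb_apply]
      constructor
      · intro hj; exact ⟨⟨j, hj⟩, by ext; simp⟩
      · rintro ⟨i, rfl⟩; simpa using i.isLt]
    simp
  -- intersection card
  have hcap : n - p ≤ (Ihat ∩ P).card := by
    have := Finset.card_union_le Ihat P
    have hu : (Ihat ∪ P).card ≤ n + p := by
      simpa using Finset.card_le_card (Finset.subset_univ (Ihat ∪ P))
    have := Finset.card_inter_add_card_union Ihat P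
    omega
  obtain ⟨I', hI'sub, hI'card⟩ := Finset.exists_subset_card_eq hcap
  refine ⟨I', fun a ha => (Finset.mem_inter.mp (hI'sub ha)).2, hI'card, ?_⟩
  have hI'hat : I' ⊆ Ihat := fun a ha => (Finset.mem_inter.mp (hI'sub ha)).1
  have hsum : (∑ j ∈ I', ((∑ i, θhat.1 i * x j i) + θhat.2 - y j) ^ 2)
      ≤ ∑ j ∈ Ihat, ((∑ i, θhat.1 i * x j i) + θhat.2 - y j) ^ 2 :=
    Finset.sum_le_sum_of_subset_of_nonneg hI'hat (fun j _ _ => sq_nonneg _)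
  have hL : trimLoss n x y Ω lam Ihat θhat ≤ trimLoss n x y Ω lam P θstar :=
    hglobal P θstar hPcard
  have hsum2 : (∑ j ∈ Ihat, ((∑ i, θhat.1 i * x j i) + θhat.2 - y j) ^ 2)
      ≤ (n : ℝ) * trimLoss n x y Ω lam P θstar := by
    have h1 : (1 / (n : ℝ)) * ∑ j ∈ Ihat, ((∑ i, θhat.1 i * x j i) + θhat.2 - y j) ^ 2
        ≤ trimLoss n x y Ω lam P θstar := by
      have := mul_nonneg hlam (hΩ θhat.1)
      have := hL
      unfold trimLoss at this ⊢
      linarith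
    have hn' : (0:ℝ) < n := by exact_mod_cast hn
    calc (∑ j ∈ Ihat, ((∑ i, θhat.1 i * x j i) + θhat.2 - y j) ^ 2)
        = (n:ℝ) * ((1 / (n : ℝ)) * ∑ j ∈ Ihat, ((∑ i, θhat.1 i * x j i) + θhat.2 - y j) ^ 2) := by
          field_simp
      _ ≤ (n:ℝ) * trimLoss n x y Ω lam P θstar := by
          exact mul_le_mul_of_nonneg_left h1 hn'.le
  have hnp : (0:ℝ) < (n:ℝ) - (p:ℝ) := by
    have : (p:ℝ) < n := by exact_mod_cast hpn
    linarith
  have hcardR : (I'.card : ℝ) = (n:ℝ) - (p:ℝ) := by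
    rw [hI'card]
    push_cast [Nat.cast_sub hpn.le]
    ring_nf
  unfold trimMSE
  rw [hcardR, div_mul_eq_mul_div, div_mul_eq_mul_div, one_mul, div_le_div_iff₀ hnp hnp]
  calc (∑ j ∈ I', ((∑ i, θhat.1 i * x j i) + θhat.2 - y j) ^ 2) * ((n:ℝ) - p)
      ≤ ((n : ℝ) * trimLoss n x y Ω lam P θstar) * ((n:ℝ) - p) := by
        apply mul_le_mul_of_nonneg_right (hsum.trans hsum2) hnp.le
    _ = (n:ℝ) * trimLoss n x y Ω lam P θstar * ((n:ℝ) - p) := by ring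
end

section
/- (Corollary of Theorem 2 for OLS with small poisoning rate) Suppose λ = 0 (ordinary least squares, so L(I,θ) = (1/n)·Σ_{j∈I}(f(x_j,θ)−y_j)²). Let (θ̂, Î) be a global minimizer of the trimmed objective (Î of size n, L(Î,θ̂) ≤ L(I,θ) for all size-n subsets I and all θ), and let θ* minimize L(P,·) where P = {1,…,n} are the pristine indices. If additionally p ≤ n/5 (poisoning ratio α = p/n ≤ 0.2), then there exists a subset I' ⊆ P with |I'| = n − p such that MSE(I', θ̂) ≤ 1.25 · MSE(P, θ*). -/
/-- Corollary of Theorem 2 for OLS (`λ = 0`) with poisoning rate `α = p/n ≤ 0.2`: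
there is a subset `I'` of `n − p` pristine points with `MSE(I', θ̂) ≤ 1.25 · MSE(P, θ*)`. -/
theorem trim_ols_small_poisoning_bound (d n p : ℕ) (hp : 0 < p) (hpn : p < n)
    (hrate : 5 * p ≤ n)
    (x : Fin (n + p) → Fin d → ℝ) (y : Fin (n + p) → ℝ)
    (Ω : (Fin d → ℝ) → ℝ) (hΩ : ∀ w, 0 ≤ Ω w) (lam : ℝ) (hlam : lam = 0)
    (P : Finset (Fin (n + p))) (hP : P = Finset.univ.filter fun j : Fin (n + p) => (j : ℕ) < n)
    (θhat : (Fin d → ℝ) × ℝ) (Ihat : Finset (Fin (n + p))) (hIhat : Ihat.card = n)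
    (hglobal : ∀ (I : Finset (Fin (n + p))) (θ : (Fin d → ℝ) × ℝ), I.card = n →
      trimLoss n x y Ω lam Ihat θhat ≤ trimLoss n x y Ω lam I θ)
    (θstar : (Fin d → ℝ) × ℝ)
    (hstar : ∀ θ : (Fin d → ℝ) × ℝ,
      trimLoss n x y Ω lam P θstar ≤ trimLoss n x y Ω lam P θ) :
    ∃ I' ⊆ P, I'.card = n - p ∧
      trimMSE x y I' θhat ≤ 1.25 * trimMSE x y P θstar := by
  have hn : 0 < n := lt_trans hp hpn
  -- card of P
  have hPcard : P.card = n := by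
    rw [hP]
    have : (Finset.univ.filter fun j : Fin (n + p) => (j : ℕ) < n) =
        Finset.image (Fin.castAdd p) Finset.univ := by
      ext j
      simp only [Finset.mem_filter, Finset.mem_univ, true_and, Finset.mem_image]
      constructor
      · intro hj
        exact ⟨⟨(j : ℕ), hj⟩, by ext; simp⟩
      · rintro ⟨k, -, rfl⟩
        exact k.isLt
    rw [this, Finset.card_image_of_injective _ (Fin.castAdd_injective _ _),
      Finset.card_univ, Fintype.card_fin]
  -- card of Ihat ∩ P
  have hcardinter : n - p ≤ (Ihat ∩ P).card := by
    have h1 : (Ihat ∪ P).card ≤ n + p := by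
      calc (Ihat ∪ P).card ≤ (Finset.univ : Finset (Fin (n + p))).card :=
            Finset.card_le_card (Finset.subset_univ _)
        _ = n + p := by simp
    have h2 := Finset.card_union_add_card_inter Ihat P
    omega
  obtain ⟨I', hI'sub, hI'card⟩ := Finset.exists_subset_card_eq hcardinter
  refine ⟨I', hI'sub.trans (Finset.inter_subset_right), hI'card, ?_⟩
  -- key sum inequality
  have hkey := hglobal P θstar hPcard
  rw [hlam] at hkey
  simp only [trimLoss, zero_mul, add_zero] at hkey
  have hnpos : (0 : ℝ) < (n : ℝ) := by exact_mod_cast hn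
  have hsum : (∑ j ∈ Ihat, ((∑ i, θhat.1 i * x j i) + θhat.2 - y j) ^ 2) ≤
      ∑ j ∈ P, ((∑ i, θstar.1 i * x j i) + θstar.2 - y j) ^ 2 := by
    have := mul_le_mul_of_nonneg_left hkey hnpos.le
    rw [← mul_assoc, ← mul_assoc, mul_one_div_cancel hnpos.ne', one_mul, one_mul] at this
    exact this
  have hsub : (∑ j ∈ I', ((∑ i, θhat.1 i * x j i) + θhat.2 - y j) ^ 2) ≤
      ∑ j ∈ Ihat, ((∑ i, θhat.1 i * x j i) + θhat.2 - y j) ^ 2 :=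
    Finset.sum_le_sum_of_subset_of_nonneg (hI'sub.trans Finset.inter_subset_left)
      (fun j _ _ => sq_nonneg _)
  have hMSEP : 0 ≤ ∑ j ∈ P, ((∑ i, θstar.1 i * x j i) + θstar.2 - y j) ^ 2 :=
    Finset.sum_nonneg fun j _ => sq_nonneg _
  have hnp : 0 < n - p := by omega
  have hnppos : (0 : ℝ) < ((n - p : ℕ) : ℝ) := by exact_mod_cast hnp
  rw [trimMSE, trimMSE, hI'card, hPcard]
  have hcast : ((n - p : ℕ) : ℝ) = (n : ℝ) - (p : ℝ) := by
    rw [Nat.cast_sub hpn.le]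
  have h5 : (5 * p : ℝ) ≤ (n : ℝ) := by exact_mod_cast hrate
  have e1 : (1 : ℝ) / ((n - p : ℕ) : ℝ) * (∑ j ∈ I', ((∑ i, θhat.1 i * x j i) + θhat.2 - y j) ^ 2)
      = (∑ j ∈ I', ((∑ i, θhat.1 i * x j i) + θhat.2 - y j) ^ 2) / ((n - p : ℕ) : ℝ) := by ring
  have e2 : 1.25 * ((1 : ℝ) / (n : ℝ) * (∑ j ∈ P, ((∑ i, θstar.1 i * x j i) + θstar.2 - y j) ^ 2))
      = (1.25 * (∑ j ∈ P, ((∑ i, θstar.1 i * x j i) + θstar.2 - y j) ^ 2)) / (n : ℝ) := by ring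
  rw [e1, e2, div_le_div_iff₀ hnppos hnpos]
  rw [hcast]
  nlinarith [hsub.trans hsum, mul_nonneg hMSEP hnpos.le,
    mul_nonneg hMSEP (by linarith : (0:ℝ) ≤ 1.25 * ((n:ℝ) - (p:ℝ)) - (n:ℝ))]
end

section
/- (Theorem 3, minimizer equivalence for OLS) Let θ0 ∈ ℝ^d satisfy ‖Xθ0 − Y‖² ≤ ‖Xθ − Y‖² for all θ ∈ ℝ^d (θ0 is an OLS minimizer on (X,Y)), and set Y' = Xθ0 ∈ ℝⁿ (the predictions of θ0 on X). Then for every θ* ∈ ℝ^d: θ* minimizes θ ↦ ‖Xθ − Y‖² + ‖Xpθ − Yp‖² over ℝ^d if and only if θ* minimizes θ ↦ ‖Xθ − Y'‖² + ‖Xpθ − Yp‖² over ℝ^d. That is, training on the poisoned dataset (X,Y) ∪ (Xp,Yp) and on (X,Y') ∪ (Xp,Yp) yields the same set of OLS minimizers. -/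
open Matrix

/-- Theorem 3 (minimizer equivalence for OLS): if `θ0` is an OLS minimizer on `(X, Y)`
and `Y' = X θ0`, then the poisoned objectives built from `(X, Y)` and `(X, Y')`
have the same set of minimizers. -/
theorem poisoned_ols_minimizer_equivalence (n p d : ℕ)
    (X : Matrix (Fin n) (Fin d) ℝ) (Y : Fin n → ℝ)
    (Xp : Matrix (Fin p) (Fin d) ℝ) (Yp : Fin p → ℝ)
    (θ0 : Fin d → ℝ)
    (hθ0 : ∀ θ : Fin d → ℝ,
      ∑ i, (X.mulVec θ0 i - Y i) ^ 2 ≤ ∑ i, (X.mulVec θ i - Y i) ^ 2)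
    (Y' : Fin n → ℝ) (hY' : Y' = X.mulVec θ0) :
    ∀ θs : Fin d → ℝ,
      (∀ θ : Fin d → ℝ,
          (∑ i, (X.mulVec θs i - Y i) ^ 2) + ∑ j, (Xp.mulVec θs j - Yp j) ^ 2 ≤
            (∑ i, (X.mulVec θ i - Y i) ^ 2) + ∑ j, (Xp.mulVec θ j - Yp j) ^ 2) ↔
      (∀ θ : Fin d → ℝ,
          (∑ i, (X.mulVec θs i - Y' i) ^ 2) + ∑ j, (Xp.mulVec θs j - Yp j) ^ 2 ≤
            (∑ i, (X.mulVec θ i - Y' i) ^ 2) + ∑ j, (Xp.mulVec θ j - Yp j) ^ 2) := by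
  -- orthogonality: residual of θ0 is orthogonal to the column space of X
  have orth : ∀ w : Fin d → ℝ,
      ∑ i, X.mulVec w i * (X.mulVec θ0 i - Y i) = 0 := by
    intro w
    set a := ∑ i, (X.mulVec w i) ^ 2 with ha_def
    set b := ∑ i, X.mulVec w i * (X.mulVec θ0 i - Y i) with hb_def
    have ha : 0 ≤ a := Finset.sum_nonneg fun i _ => sq_nonneg _
    have key : ∀ t : ℝ, 0 ≤ a * t ^ 2 + 2 * b * t := by
      intro t
      have h := hθ0 (θ0 + t • w)
      have hexp : ∀ i, X.mulVec (θ0 + t • w) i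
          = X.mulVec θ0 i + t * X.mulVec w i := by
        intro i
        simp [mulVec_add, mulVec_smul, smul_eq_mul, Pi.add_apply, Pi.smul_apply]
      have hab : a * t ^ 2 + 2 * b * t
          = ∑ i, ((X.mulVec w i) ^ 2 * t ^ 2
              + 2 * (X.mulVec w i * (X.mulVec θ0 i - Y i)) * t) := by
        rw [ha_def, hb_def, Finset.sum_mul, Finset.mul_sum, Finset.sum_mul,
          ← Finset.sum_add_distrib]
      have : ∑ i, (X.mulVec (θ0 + t • w) i - Y i) ^ 2
          = (∑ i, (X.mulVec θ0 i - Y i) ^ 2) + (a * t ^ 2 + 2 * b * t) := by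
        rw [hab, ← Finset.sum_add_distrib]
        apply Finset.sum_congr rfl
        intro i _
        rw [hexp i]
        ring
      rw [this] at h
      linarith
    by_contra hb
    have hb' : b ≠ 0 := hb
    have h := key (-b / (a + 1))
    have hpos : (0:ℝ) < a + 1 := by linarith
    have : a * (-b / (a + 1)) ^ 2 + 2 * b * (-b / (a + 1))
        = -(b ^ 2) * (a + 2) / (a + 1) ^ 2 := by
      field_simp
      ring
    rw [this] at h
    have hb2 : 0 < b ^ 2 := by positivity
    have : -(b ^ 2) * (a + 2) / (a + 1) ^ 2 < 0 := by
      apply div_neg_of_neg_of_pos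
      · nlinarith
      · positivity
    linarith
  -- pointwise identity: old loss = new loss + constant
  have ident : ∀ θ : Fin d → ℝ,
      ∑ i, (X.mulVec θ i - Y i) ^ 2
        = (∑ i, (X.mulVec θ i - Y' i) ^ 2) + ∑ i, (X.mulVec θ0 i - Y i) ^ 2 := by
    intro θ
    have hsub : ∀ i, X.mulVec θ i - Y' i = X.mulVec (θ - θ0) i := by
      intro i
      simp [hY', mulVec_sub, Pi.sub_apply]
    have hcross := orth (θ - θ0)
    have expand : ∀ i, (X.mulVec θ i - Y i) ^ 2
        = (X.mulVec (θ - θ0) i) ^ 2 + (X.mulVec θ0 i - Y i) ^ 2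
          + 2 * (X.mulVec (θ - θ0) i * (X.mulVec θ0 i - Y i)) := by
      intro i
      have : X.mulVec θ i - Y i
          = X.mulVec (θ - θ0) i + (X.mulVec θ0 i - Y i) := by
        simp [mulVec_sub, Pi.sub_apply]
      rw [this]; ring
    calc ∑ i, (X.mulVec θ i - Y i) ^ 2
        = (∑ i, (X.mulVec (θ - θ0) i) ^ 2) + (∑ i, (X.mulVec θ0 i - Y i) ^ 2)
          + 2 * ∑ i, X.mulVec (θ - θ0) i * (X.mulVec θ0 i - Y i) := by
          rw [Finset.mul_sum, ← Finset.sum_add_distrib, ← Finset.sum_add_distrib]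
          exact Finset.sum_congr rfl fun i _ => expand i
      _ = (∑ i, (X.mulVec θ i - Y' i) ^ 2) + ∑ i, (X.mulVec θ0 i - Y i) ^ 2 := by
          rw [hcross]
          simp only [hsub]
          try ring
  intro θs
  constructor
  · intro h θ
    have := h θ
    have h1 := ident θs
    have h2 := ident θ
    linarith
  · intro h θ
    have := h θ
    have h1 := ident θs
    have h2 := ident θ
    linarith
end

section
/- (Gradient of W'_tr with respect to the poisoning response y_c) Let x_c ∈ ℝ^d, and suppose u ∈ ℝ^d and s ∈ ℝ satisfy the KKT-derived equations Σu + s·μ = (1/n)·x_c and ⟨μ,u⟩ + s = 1/n (so (u,s) is the derivative of the learned parameters (w,b) with respect to y_c). Then (2/n)·Σ_{i=1}^n (f(x_i,θ) − f(x_i,θ0))·(⟨x_i,u⟩ + s) = (2/n)·(f(x_c,θ) − f(x_c,θ0)). -/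
open Matrix

/-- Gradient of `W'_tr` with respect to the poisoning response `y_c`: if `(u, s)` satisfies
the KKT-derived equations `Σu + sμ = (1/n)·x_c` and `⟨μ,u⟩ + s = 1/n`, then the directional
derivative equals `(2/n)(f(x_c,θ) − f(x_c,θ0))`. -/
theorem attack_gradient_response (d n : ℕ) (hn : 1 ≤ n)
    (x : Fin n → Fin d → ℝ)
    (w w0 : Fin d → ℝ) (b b0 : ℝ)
    (Sig : Matrix (Fin d) (Fin d) ℝ)
    (hSig : Sig = (1 / (n : ℝ)) • ∑ i, Matrix.vecMulVec (x i) (x i))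
    (mu : Fin d → ℝ) (hmu : mu = (1 / (n : ℝ)) • ∑ i, x i)
    (xc : Fin d → ℝ) (u : Fin d → ℝ) (s : ℝ)
    (hu : Sig.mulVec u + s • mu = (1 / (n : ℝ)) • xc)
    (hs : (∑ j, mu j * u j) + s = 1 / (n : ℝ)) :
    (2 / (n : ℝ)) * ∑ i,
        (((∑ j, w j * x i j) + b) - ((∑ j, w0 j * x i j) + b0)) * ((∑ j, x i j * u j) + s) =
      (2 / (n : ℝ)) * (((∑ j, w j * xc j) + b) - ((∑ j, w0 j * xc j) + b0)) := by
  have hn0 : (n : ℝ) ≠ 0 := Nat.cast_ne_zero.mpr (by omega)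
  subst hSig hmu
  -- componentwise version of hu, denominators cleared
  have hu' : ∀ j, (∑ i, x i j * ∑ k, x i k * u k) + s * ∑ i, x i j = xc j := by
    intro j
    have h := congrFun hu j
    simp only [Pi.add_apply, Pi.smul_apply, smul_eq_mul, Matrix.smul_mulVec,
      Matrix.mulVec, dotProduct, Matrix.sum_apply, Finset.sum_apply,
      Matrix.vecMulVec_apply] at h
    have hsw : (∑ k, (∑ i, x i j * x i k) * u k) = ∑ i, x i j * ∑ k, x i k * u k := by
      simp only [Finset.sum_mul, Finset.mul_sum]
      rw [Finset.sum_comm]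
      simp [mul_assoc]
    field_simp at h
    rw [hsw] at h
    linarith
  -- denominators-cleared version of hs
  have hs' : (∑ i, ((∑ k, x i k * u k) + s)) = 1 := by
    have h2 : (∑ j, ((1 / (n:ℝ)) * ∑ i, x i j) * u j) + s = 1 / n := by
      simpa [Finset.sum_apply] using hs
    have e : (∑ j, ((1 / (n:ℝ)) * ∑ i, x i j) * u j)
        = (1/(n:ℝ)) * ∑ j, (∑ i, x i j) * u j := by
      rw [Finset.mul_sum]; exact Finset.sum_congr rfl fun j _ => by ring
    rw [e] at h2
    have h3 : (∑ j, (∑ i, x i j) * u j) + (n:ℝ) * s = 1 := by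
      field_simp at h2
      linarith
    rw [Finset.sum_add_distrib, Finset.sum_const, Finset.card_univ, Fintype.card_fin,
      nsmul_eq_mul]
    have e2 : (∑ i, ∑ k, x i k * u k) = ∑ j, (∑ i, x i j) * u j := by
      rw [Finset.sum_comm]
      simp [Finset.sum_mul]
    rw [e2]
    exact h3
  congr 1
  set v : Fin d → ℝ := fun j => w j - w0 j with hv
  set c : ℝ := b - b0 with hc
  have lhs_eq : ∀ i, (((∑ j, w j * x i j) + b) - ((∑ j, w0 j * x i j) + b0))
      = (∑ j, v j * x i j) + c := by
    intro i
    simp [hv, hc, Finset.sum_sub_distrib, sub_mul]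
    ring
  have rhs_eq : (((∑ j, w j * xc j) + b) - ((∑ j, w0 j * xc j) + b0))
      = (∑ j, v j * xc j) + c := by
    simp [hv, hc, Finset.sum_sub_distrib, sub_mul]
    ring
  rw [rhs_eq]
  calc ∑ i, (((∑ j, w j * x i j) + b) - ((∑ j, w0 j * x i j) + b0)) * ((∑ j, x i j * u j) + s)
      = ∑ i, ((∑ j, v j * x i j) + c) * ((∑ j, x i j * u j) + s) := by
        refine Finset.sum_congr rfl fun i _ => by rw [lhs_eq i]
    _ = (∑ i, (∑ j, v j * x i j) * ((∑ k, x i k * u k) + s))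
        + c * ∑ i, ((∑ k, x i k * u k) + s) := by
        rw [Finset.mul_sum, ← Finset.sum_add_distrib]
        exact Finset.sum_congr rfl fun i _ => by ring
    _ = (∑ j, v j * ((∑ i, x i j * ∑ k, x i k * u k) + s * ∑ i, x i j)) + c * 1 := by
        rw [hs']
        congr 1
        calc ∑ i, (∑ j, v j * x i j) * ((∑ k, x i k * u k) + s)
            = ∑ i, ∑ j, v j * (x i j * ((∑ k, x i k * u k) + s)) := by
              simp [Finset.sum_mul, mul_assoc]
          _ = ∑ j, ∑ i, v j * (x i j * ((∑ k, x i k * u k) + s)) := Finset.sum_comm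
          _ = ∑ j, v j * ((∑ i, x i j * ∑ k, x i k * u k) + s * ∑ i, x i j) := by
              refine Finset.sum_congr rfl fun j _ => ?_
              rw [← Finset.mul_sum]
              congr 1
              simp only [mul_add, Finset.sum_add_distrib]
              congr 1
              rw [Finset.mul_sum]
              exact Finset.sum_congr rfl fun i _ => by ring
    _ = (∑ j, v j * xc j) + c := by
        simp only [fun j => hu' j]
        ring
end

section
/- (Gradient of W'_tr with respect to a coordinate of the poisoning point x_c) Let x_c ∈ ℝ^d, y_c ∈ ℝ, let k ∈ {1,…,d}, let e_k denote the k-th standard basis vector of ℝ^d and w_k the k-th coordinate of w. Suppose u ∈ ℝ^d and s ∈ ℝ satisfy the KKT-derived equations Σu + s·μ = −(1/n)·(w_k·x_c + (f(x_c,θ) − y_c)·e_k) and ⟨μ,u⟩ + s = −(1/n)·w_k (so (u,s) is the derivative of the learned parameters (w,b) with respect to the k-th coordinate of x_c). Then (2/n)·Σ_{i=1}^n (f(x_i,θ) − f(x_i,θ0))·(⟨x_i,u⟩ + s) = (2/n)·(⟨w0 − w, w_k·x_c + (f(x_c,θ) − y_c)·e_k⟩ + (b0 − b)·w_k). -/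
open Matrix

/-- Gradient of `W'_tr` with respect to the `k`-th coordinate of the poisoning point `x_c`:
if `(u, s)` satisfies the KKT-derived equations
`Σu + sμ = −(1/n)(w_k x_c + (f(x_c,θ) − y_c) e_k)` and `⟨μ,u⟩ + s = −(1/n) w_k`, then the
directional derivative equals
`(2/n)(⟨w0 − w, w_k x_c + (f(x_c,θ) − y_c) e_k⟩ + (b0 − b) w_k)`. -/
theorem attack_gradient_feature (d n : ℕ) (hn : 1 ≤ n)
    (x : Fin n → Fin d → ℝ)
    (w w0 : Fin d → ℝ) (b b0 : ℝ)
    (Sig : Matrix (Fin d) (Fin d) ℝ)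
    (hSig : Sig = (1 / (n : ℝ)) • ∑ i, Matrix.vecMulVec (x i) (x i))
    (mu : Fin d → ℝ) (hmu : mu = (1 / (n : ℝ)) • ∑ i, x i)
    (xc : Fin d → ℝ) (yc : ℝ) (k : Fin d)
    (u : Fin d → ℝ) (s : ℝ)
    (hu : Sig.mulVec u + s • mu =
      -((1 / (n : ℝ)) • (w k • xc + (((∑ j, w j * xc j) + b) - yc) • (Pi.single k (1 : ℝ) : Fin d → ℝ))))
    (hs : (∑ j, mu j * u j) + s = -((1 / (n : ℝ)) * w k)) :
    (2 / (n : ℝ)) * ∑ i,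
        (((∑ j, w j * x i j) + b) - ((∑ j, w0 j * x i j) + b0)) * ((∑ j, x i j * u j) + s) =
      (2 / (n : ℝ)) *
        ((∑ j, (w0 j - w j) *
            (w k • xc + (((∑ j', w j' * xc j') + b) - yc) • (Pi.single k (1 : ℝ) : Fin d → ℝ)) j)
          + (b0 - b) * w k) := by
  have hn0 : (n : ℝ) ≠ 0 := Nat.cast_ne_zero.mpr (by omega)
  have hn0' : (1 / (n : ℝ)) ≠ 0 := one_div_ne_zero hn0
  set c : Fin d → ℝ :=
    w k • xc + (((∑ j, w j * xc j) + b) - yc) • (Pi.single k (1 : ℝ) : Fin d → ℝ) with hc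
  -- coordinatewise consequence of `hu`
  have hu' : ∀ j, ∑ i, x i j * ((∑ l, x i l * u l) + s) = -(c j) := by
    intro j
    have h := congrFun hu j
    rw [hSig, hmu] at h
    simp only [Pi.add_apply, Pi.smul_apply, Matrix.mulVec, Matrix.vecMulVec_apply,
      dotProduct, Matrix.sum_apply, Matrix.smul_apply, Finset.sum_apply, Pi.neg_apply, smul_eq_mul,
      Finset.mul_sum] at h
    have h2 : (1 / (n : ℝ)) * ((∑ l, (∑ i, x i j * x i l) * u l) + (∑ i, x i j) * s)
        = (1 / (n : ℝ)) * (-(c j)) := by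
      calc (1 / (n : ℝ)) * ((∑ l, (∑ i, x i j * x i l) * u l) + (∑ i, x i j) * s)
          = (∑ l, (∑ i, 1 / (n : ℝ) * (x i j * x i l)) * u l)
              + ∑ i, s * (1 / (n : ℝ) * x i j) := by
            rw [mul_add]
            congr 1
            · rw [Finset.mul_sum]
              refine Finset.sum_congr rfl fun l _ => ?_
              rw [← Finset.mul_sum, mul_assoc]
            · rw [Finset.sum_mul, Finset.mul_sum]
              exact Finset.sum_congr rfl fun i _ => by ring
        _ = -(1 / (n : ℝ) * c j) := h
        _ = (1 / (n : ℝ)) * (-(c j)) := by ring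
    have h3 := mul_left_cancel₀ hn0' h2
    calc ∑ i, x i j * ((∑ l, x i l * u l) + s)
        = (∑ l, (∑ i, x i j * x i l) * u l) + (∑ i, x i j) * s := by
          simp only [mul_add, Finset.sum_add_distrib, Finset.mul_sum, Finset.sum_mul]
          congr 1
          rw [Finset.sum_comm]
          simp [mul_assoc]
      _ = -(c j) := h3
  -- consequence of `hs`
  have hs' : ∑ i, ((∑ l, x i l * u l) + s) = -(w k) := by
    have h := hs
    rw [hmu] at h
    simp only [Pi.smul_apply, Finset.sum_apply, smul_eq_mul, Finset.mul_sum,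
      Finset.sum_mul] at h
    have h2 : (1 / (n : ℝ)) * ((∑ l, (∑ i, x i l) * u l) + (n : ℝ) * s)
        = (1 / (n : ℝ)) * (-(w k)) := by
      calc (1 / (n : ℝ)) * ((∑ l, (∑ i, x i l) * u l) + (n : ℝ) * s)
          = (∑ l, ∑ i, 1 / (n : ℝ) * x i l * u l) + s := by
            rw [mul_add]
            congr 1
            · rw [Finset.mul_sum]
              refine Finset.sum_congr rfl fun l _ => ?_
              rw [Finset.sum_mul, Finset.mul_sum]
              exact Finset.sum_congr rfl fun i _ => by ring
            · field_simp
        _ = -(1 / (n : ℝ) * w k) := h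
        _ = (1 / (n : ℝ)) * (-(w k)) := by ring
    have h3 := mul_left_cancel₀ hn0' h2
    calc ∑ i, ((∑ l, x i l * u l) + s)
        = (∑ l, (∑ i, x i l) * u l) + (n : ℝ) * s := by
          simp only [Finset.sum_add_distrib, Finset.sum_const, Finset.card_univ,
            Fintype.card_fin, nsmul_eq_mul, Finset.sum_mul]
          congr 1
          rw [Finset.sum_comm]
      _ = -(w k) := h3
  -- main computation
  have key : ∑ i, (((∑ j, w j * x i j) + b) - ((∑ j, w0 j * x i j) + b0))
        * ((∑ j, x i j * u j) + s)
      = (∑ j, (w j - w0 j) * (∑ i, x i j * ((∑ l, x i l * u l) + s)))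
        + (b - b0) * ∑ i, ((∑ l, x i l * u l) + s) := by
    calc ∑ i, (((∑ j, w j * x i j) + b) - ((∑ j, w0 j * x i j) + b0))
          * ((∑ j, x i j * u j) + s)
        = ∑ i, ((∑ j, (w j - w0 j) * (x i j * ((∑ l, x i l * u l) + s)))
            + (b - b0) * ((∑ l, x i l * u l) + s)) := by
          refine Finset.sum_congr rfl fun i _ => ?_
          have : (∑ j, (w j - w0 j) * (x i j * ((∑ l, x i l * u l) + s)))
              = (∑ j, (w j - w0 j) * x i j) * ((∑ l, x i l * u l) + s) := by
            rw [Finset.sum_mul]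
            exact Finset.sum_congr rfl fun j _ => by ring
          rw [this]
          have h4 : (∑ j, (w j - w0 j) * x i j)
              = (∑ j, w j * x i j) - (∑ j, w0 j * x i j) := by
            rw [← Finset.sum_sub_distrib]
            exact Finset.sum_congr rfl fun j _ => by ring
          rw [h4]; ring
      _ = (∑ j, (w j - w0 j) * (∑ i, x i j * ((∑ l, x i l * u l) + s)))
            + (b - b0) * ∑ i, ((∑ l, x i l * u l) + s) := by
          rw [Finset.sum_add_distrib, Finset.sum_comm, Finset.mul_sum]
          congr 1
          exact Finset.sum_congr rfl fun j _ => by rw [Finset.mul_sum]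
  rw [key, hs']
  have h5 : (∑ j, (w j - w0 j) * (∑ i, x i j * ((∑ l, x i l * u l) + s)))
      = ∑ j, (w0 j - w j) * c j := by
    refine Finset.sum_congr rfl fun j _ => ?_
    rw [hu' j]; ring
  rw [h5]
  ring
end

section
/- (Closed form of the x_c-gradient of W'_tr) In the setting of the previous statement, assume additionally that the poisoning response lies on the original regression hyperplane, i.e. y_c = f(x_c, θ0). Then the expression simplifies to (2/n)·Σ_{i=1}^n (f(x_i,θ) − f(x_i,θ0))·(⟨x_i,u⟩ + s) = (2/n)·(f(x_c,θ) − f(x_c,θ0))·(w0 − 2w)_k, where (w0 − 2w)_k denotes the k-th coordinate of the vector w0 − 2w. -/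
open Matrix

/-- Closed form of the `x_c`-gradient of `W'_tr`: if in addition `y_c = f(x_c, θ0)` lies on
the original regression hyperplane, the directional derivative simplifies to
`(2/n)(f(x_c,θ) − f(x_c,θ0))·(w0 − 2w)_k`. -/
theorem attack_gradient_feature_closed_form (d n : ℕ) (hn : 1 ≤ n)
    (x : Fin n → Fin d → ℝ)
    (w w0 : Fin d → ℝ) (b b0 : ℝ)
    (Sig : Matrix (Fin d) (Fin d) ℝ)
    (hSig : Sig = (1 / (n : ℝ)) • ∑ i, Matrix.vecMulVec (x i) (x i))
    (mu : Fin d → ℝ) (hmu : mu = (1 / (n : ℝ)) • ∑ i, x i)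
    (xc : Fin d → ℝ) (yc : ℝ) (k : Fin d)
    (u : Fin d → ℝ) (s : ℝ)
    (hu : Sig.mulVec u + s • mu =
      -((1 / (n : ℝ)) • (w k • xc + (((∑ j, w j * xc j) + b) - yc) • (Pi.single k (1 : ℝ) : Fin d → ℝ))))
    (hs : (∑ j, mu j * u j) + s = -((1 / (n : ℝ)) * w k))
    (hyc : yc = (∑ j, w0 j * xc j) + b0) :
    (2 / (n : ℝ)) * ∑ i,
        (((∑ j, w j * x i j) + b) - ((∑ j, w0 j * x i j) + b0)) * ((∑ j, x i j * u j) + s) =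
      (2 / (n : ℝ)) * (((∑ j, w j * xc j) + b) - ((∑ j, w0 j * xc j) + b0))
        * (w0 k - 2 * w k) := by
  have n0 : (n : ℝ) ≠ 0 := Nat.cast_ne_zero.mpr (by omega)
  set c := b - b0 with hc
  set A : Fin n → ℝ := fun i => ∑ j, (w j - w0 j) * x i j with hA
  set B : Fin n → ℝ := fun i => ∑ j, x i j * u j with hB
  have hSigE : ∀ j l, Sig j l = (1 / (n : ℝ)) * ∑ i, x i j * x i l := by
    intro j l
    rw [hSig]
    simp only [Pi.smul_apply, Matrix.smul_apply, Matrix.sum_apply, Matrix.vecMulVec_apply,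
      smul_eq_mul]
  have hmuE : ∀ j, mu j = (1 / (n : ℝ)) * ∑ i, x i j := by
    intro j; rw [hmu]; simp
  have hu' : ∀ j, (∑ l, Sig j l * u l) + s * mu j =
      -((1 / (n : ℝ)) * (w k * xc j + (((∑ j, w j * xc j) + b) - yc) * (Pi.single k (1:ℝ) : Fin d → ℝ) j)) := by
    intro j
    have h := congrFun hu j
    simp only [Pi.add_apply, Pi.smul_apply, Pi.neg_apply, smul_eq_mul] at h
    rw [Matrix.mulVec, dotProduct] at h
    linarith [h]
  have step3 : ∑ i, A i * B i = (n : ℝ) * ∑ j, (w j - w0 j) * (∑ l, Sig j l * u l) := by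
    calc ∑ i, A i * B i
        = ∑ i, ∑ j, ∑ l, (w j - w0 j) * x i j * (x i l * u l) := by
          refine Finset.sum_congr rfl fun i _ => ?_
          rw [hA, hB, Finset.sum_mul_sum]
      _ = ∑ j, ∑ l, (w j - w0 j) * ((∑ i, x i j * x i l) * u l) := by
          rw [Finset.sum_comm]
          refine Finset.sum_congr rfl fun j _ => ?_
          rw [Finset.sum_comm]
          refine Finset.sum_congr rfl fun l _ => ?_
          rw [Finset.sum_mul, Finset.mul_sum]
          exact Finset.sum_congr rfl fun i _ => by ring
      _ = (n : ℝ) * ∑ j, (w j - w0 j) * (∑ l, Sig j l * u l) := by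
          conv_rhs => rw [Finset.mul_sum]
          refine Finset.sum_congr rfl fun j _ => ?_
          rw [Finset.mul_sum, Finset.mul_sum]
          refine Finset.sum_congr rfl fun l _ => ?_
          rw [hSigE]
          field_simp
  have step4 : ∑ i, A i = (n : ℝ) * ∑ j, (w j - w0 j) * mu j := by
    calc ∑ i, A i = ∑ j, (w j - w0 j) * ∑ i, x i j := by
          rw [Finset.sum_comm]
          exact Finset.sum_congr rfl fun j _ => by rw [Finset.mul_sum]
      _ = (n : ℝ) * ∑ j, (w j - w0 j) * mu j := by
          rw [Finset.mul_sum]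
          refine Finset.sum_congr rfl fun j _ => ?_
          rw [hmuE]; field_simp; try ring
  have step5 : ∑ i, B i = (n : ℝ) * ∑ j, mu j * u j := by
    calc ∑ i, B i = ∑ j, (∑ i, x i j) * u j := by
          rw [Finset.sum_comm]
          exact Finset.sum_congr rfl fun j _ => by rw [Finset.sum_mul]
      _ = (n : ℝ) * ∑ j, mu j * u j := by
          rw [Finset.mul_sum]
          refine Finset.sum_congr rfl fun j _ => ?_
          rw [hmuE]; field_simp; try ring
  have key : ∑ i,
        (((∑ j, w j * x i j) + b) - ((∑ j, w0 j * x i j) + b0)) * ((∑ j, x i j * u j) + s)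
      = (n : ℝ) * ((∑ j, (w j - w0 j) * ((∑ l, Sig j l * u l) + s * mu j))
          + c * ((∑ j, mu j * u j) + s)) := by
    have h6 : ∑ j, (w j - w0 j) * ((∑ l, Sig j l * u l) + s * mu j)
        = (∑ j, (w j - w0 j) * (∑ l, Sig j l * u l)) + s * ∑ j, (w j - w0 j) * mu j := by
      rw [Finset.mul_sum, ← Finset.sum_add_distrib]
      exact Finset.sum_congr rfl fun j _ => by ring
    calc ∑ i, (((∑ j, w j * x i j) + b) - ((∑ j, w0 j * x i j) + b0)) * ((∑ j, x i j * u j) + s)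
        = ∑ i, (A i + c) * (B i + s) := by
          refine Finset.sum_congr rfl fun i _ => ?_
          congr 1
          simp only [hA, sub_mul, Finset.sum_sub_distrib]
          ring
      _ = ∑ i, (A i * B i) + s * ∑ i, A i + c * ∑ i, B i + (n : ℝ) * (c * s) := by
          simp only [add_mul, mul_add, Finset.sum_add_distrib, Finset.mul_sum]
          simp only [Finset.sum_const, Finset.card_univ, Fintype.card_fin, nsmul_eq_mul]
          have h7 : ∑ i, A i * s = ∑ i, s * A i :=
            Finset.sum_congr rfl fun i _ => mul_comm _ _
          rw [h7]
          ring
      _ = _ := by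
          rw [step3, step4, step5, h6]
          ring
  rw [key]
  set Δ : ℝ := ((∑ j, w j * xc j) + b) - yc with hΔ
  have hsingle : ∑ j, (w j - w0 j) * (Pi.single k (1:ℝ) : Fin d → ℝ) j = w k - w0 k := by
    simp [Pi.single_apply, mul_ite]
  have hsum : ∑ j, (w j - w0 j) * ((∑ l, Sig j l * u l) + s * mu j)
      = -(1/(n:ℝ)) * (w k * ∑ j, (w j - w0 j) * xc j) + (-(1/(n:ℝ)) * Δ) * (w k - w0 k) := by
    calc ∑ j, (w j - w0 j) * ((∑ l, Sig j l * u l) + s * mu j)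
        = ∑ j, (-(1/(n:ℝ)) * (w k * ((w j - w0 j) * xc j))
            + (-(1/(n:ℝ)) * Δ) * ((w j - w0 j) * (Pi.single k (1:ℝ) : Fin d → ℝ) j)) := by
          refine Finset.sum_congr rfl fun j _ => ?_
          rw [hu' j]; ring
      _ = -(1/(n:ℝ)) * (w k * ∑ j, (w j - w0 j) * xc j)
            + (-(1/(n:ℝ)) * Δ) * (w k - w0 k) := by
          rw [Finset.sum_add_distrib, ← hsingle, ← Finset.mul_sum, ← Finset.mul_sum,
            ← Finset.mul_sum]
  have hS : ∑ j, (w j - w0 j) * xc j = (∑ j, w j * xc j) - ∑ j, w0 j * xc j := by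
    rw [← Finset.sum_sub_distrib]
    exact Finset.sum_congr rfl fun j _ => by ring
  rw [hsum, hs, hS, hΔ, hyc]
  field_simp
  ring
end
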